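/- Let X₁, …, X_s be i.i.d. random vectors in ℝ^p satisfying the sub-Gaussian vector condition with constant L > 0, and let Σ* = E[X₁X₁ᵀ]. Then for every χ > 0, with δ_s(χ) = 2L²((2·log p + χ)/s + √((4·log p + 2χ)/s)), one has P(max_{k,l} |(1/s)·Σ_{i=1}^s X_{i,k}X_{i,l} − Σ*_{kl}| ≥ δ_s(χ)) ≤ 2e^{−χ}. -/

import Mathlib

open MeasureTheory ProbabilityTheory Real
set_option maxHeartbeats 4000000

lemma exp_convex_aux {θ x : ℝ} (h0 : 0 ≤ θ) (h1 : θ ≤ 1) :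
    Real.exp (θ * x) ≤ 1 - θ + θ * Real.exp x := by
  have hb : (0:ℝ) ≤ 1 - θ := by linarith
  have hab : θ + (1 - θ) = 1 := by ring
  have := convexOn_exp.2 (Set.mem_univ x) (Set.mem_univ (0:ℝ)) h0 hb hab
  simp only [smul_eq_mul, mul_zero, add_zero, Real.exp_zero, mul_one] at this
  linarith [this]

lemma exp_theta_ineq {θ x : ℝ} (h0 : 0 ≤ θ) (h1 : θ ≤ 1) (hx : 0 ≤ x) :
    Real.exp (θ * x) - 1 - θ * x ≤ θ ^ 2 * (Real.exp x - 1 - x) := by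
  set h : ℝ → ℝ := fun y => θ ^ 2 * (Real.exp y - 1 - y) - (Real.exp (θ * y) - 1 - θ * y) with hh
  have hd : ∀ y, HasDerivAt h (θ ^ 2 * (Real.exp y - 1) - (θ * Real.exp (θ * y) - θ)) y := by
    intro y
    have h1' : HasDerivAt (fun y : ℝ => θ ^ 2 * (Real.exp y - 1 - y))
        (θ ^ 2 * (Real.exp y - 1)) y := by
      have := ((Real.hasDerivAt_exp y).sub_const 1).sub (hasDerivAt_id y)
      simpa using this.const_mul (θ ^ 2)
    have h2' : HasDerivAt (fun y : ℝ => Real.exp (θ * y) - 1 - θ * y)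
        (θ * Real.exp (θ * y) - θ) y := by
      have hc : HasDerivAt (fun y : ℝ => θ * y) θ y := by
        simpa using (hasDerivAt_id y).const_mul θ
      have := (((Real.hasDerivAt_exp (θ * y)).comp y hc).sub_const 1).sub hc
      exact this.congr_deriv (by ring)
    exact h1'.sub h2'
  have hmono : Monotone h := by
    apply monotone_of_deriv_nonneg (fun y => (hd y).differentiableAt)
    intro y
    rw [(hd y).deriv]
    have := exp_convex_aux h0 h1 (x := y)
    nlinarith [Real.exp_nonneg y, Real.exp_nonneg (θ * y)]
  have h2 := hmono hx
  simp only [hh, mul_zero, Real.exp_zero] at h2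
  linarith

lemma exp_neg_le_quad {y : ℝ} (hy : 0 ≤ y) : Real.exp (-y) ≤ 1 - y + y ^ 2 / 2 := by
  set g : ℝ → ℝ := fun z => 1 - z + z ^ 2 / 2 - Real.exp (-z) with hg
  have hd : ∀ z, HasDerivAt g (-1 + z + Real.exp (-z)) z := by
    intro z
    have h1' : HasDerivAt (fun z : ℝ => 1 - z + z ^ 2 / 2) (-1 + z) z := by
      have h2' := (((hasDerivAt_id z).pow 2).div_const 2)
      have := ((hasDerivAt_const z (1:ℝ)).sub (hasDerivAt_id z)).add h2'
      exact this.congr_deriv (by rw [show (2:ℕ) - 1 = 1 from rfl]; simp only [id, pow_one, Nat.cast_ofNat]; ring)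
    have h2' : HasDerivAt (fun z : ℝ => Real.exp (-z)) (-Real.exp (-z)) z := by
      have := (Real.hasDerivAt_exp (-z)).comp z ((hasDerivAt_id z).neg)
      exact this.congr_deriv (by ring)
    have := h1'.sub h2'
    exact this.congr_deriv (by ring)
  have hmono : MonotoneOn g (Set.Ici 0) := by
    apply monotoneOn_of_deriv_nonneg (convex_Ici 0)
      (fun z _ => (hd z).differentiableAt.continuousAt.continuousWithinAt)
      (fun z _ => (hd z).differentiableAt.differentiableWithinAt)
    intro z hz
    rw [(hd z).deriv]
    have : 1 - z ≤ Real.exp (-z) := by linarith [Real.add_one_le_exp (-z)]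
    simp only [interior_Ici, Set.mem_Ioi] at hz
    linarith
  have h2 := hmono (Set.self_mem_Ici) (Set.mem_Ici.2 hy) hy
  simp only [hg, neg_zero, Real.exp_zero] at h2
  norm_num at h2
  linarith

lemma quad_le_exp {x : ℝ} (hx : 0 ≤ x) : 1 + x + x ^ 2 / 2 ≤ Real.exp x := by
  have := Real.sum_le_exp_of_nonneg hx 3
  simp [Finset.sum_range_succ] at this
  nlinarith [this]
set_option linter.unusedSectionVars false
set_option linter.unusedVariables false

section core
variable {Ω : Type*} [MeasurableSpace Ω] {μ : Measure Ω} [IsProbabilityMeasure μ]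
variable {Z : Ω → ℝ} {K : ℝ}

lemma intE (hZm : Measurable Z) (hK : 0 < K)
    (hexp : ∫⁻ ω, ENNReal.ofReal (Real.exp (Z ω / K)) ∂μ ≤ 2) :
    Integrable (fun ω => Real.exp (Z ω / K)) μ := by
  refine ⟨((hZm.div_const K).exp).aestronglyMeasurable, ?_⟩
  rw [hasFiniteIntegral_iff_ofReal (Filter.Eventually.of_forall fun ω => (Real.exp_pos _).le)]
  exact lt_of_le_of_lt hexp (by norm_num)

lemma intE_le (hZm : Measurable Z) (hK : 0 < K)
    (hexp : ∫⁻ ω, ENNReal.ofReal (Real.exp (Z ω / K)) ∂μ ≤ 2) :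
    ∫ ω, Real.exp (Z ω / K) ∂μ ≤ 2 := by
  rw [integral_eq_lintegral_of_nonneg_ae (Filter.Eventually.of_forall fun ω => (Real.exp_pos _).le)
    ((hZm.div_const K).exp).aestronglyMeasurable]
  calc (∫⁻ ω, ENNReal.ofReal (Real.exp (Z ω / K)) ∂μ).toReal
      ≤ ((2 : ENNReal)).toReal := ENNReal.toReal_mono (by norm_num) hexp
    _ = 2 := by norm_num

lemma intZ (hZm : Measurable Z) (hZnn : ∀ ω, 0 ≤ Z ω) (hK : 0 < K)
    (hexp : ∫⁻ ω, ENNReal.ofReal (Real.exp (Z ω / K)) ∂μ ≤ 2) :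
    Integrable Z μ := by
  refine Integrable.mono' ((intE hZm hK hexp).const_mul K) hZm.aestronglyMeasurable
    (Filter.Eventually.of_forall fun ω => ?_)
  rw [Real.norm_of_nonneg (hZnn ω)]
  have h1 : Z ω / K ≤ Real.exp (Z ω / K) := (Real.add_one_le_exp _).trans' (by linarith)
  calc Z ω = K * (Z ω / K) := by field_simp
    _ ≤ K * Real.exp (Z ω / K) := by nlinarith [hK]

lemma intZsq (hZm : Measurable Z) (hZnn : ∀ ω, 0 ≤ Z ω) (hK : 0 < K)
    (hexp : ∫⁻ ω, ENNReal.ofReal (Real.exp (Z ω / K)) ∂μ ≤ 2) :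
    Integrable (fun ω => Z ω ^ 2) μ := by
  refine Integrable.mono' ((intE hZm hK hexp).const_mul (2 * K ^ 2))
    ((hZm.pow_const 2).aestronglyMeasurable) (Filter.Eventually.of_forall fun ω => ?_)
  rw [Real.norm_of_nonneg (sq_nonneg _)]
  have h1 := quad_le_exp (x := Z ω / K) (div_nonneg (hZnn ω) hK.le)
  have h4 := mul_le_mul_of_nonneg_left h1 (show (0:ℝ) ≤ 2*K^2 by positivity)
  have e1 : 2*K^2*(1 + Z ω/K + (Z ω/K)^2/2) = 2*K^2 + 2*K*Z ω + Z ω^2 := by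
    field_simp
  nlinarith [h4, e1, hZnn ω, hK.le, sq_nonneg K, mul_nonneg hK.le (hZnn ω)]

lemma Zsq_le (hZm : Measurable Z) (hZnn : ∀ ω, 0 ≤ Z ω) (hK : 0 < K)
    (hexp : ∫⁻ ω, ENNReal.ofReal (Real.exp (Z ω / K)) ∂μ ≤ 2) :
    ∫ ω, Z ω ^ 2 ∂μ ≤ 2 * K ^ 2 := by
  have hm : 0 ≤ ∫ ω, Z ω ∂μ := integral_nonneg hZnn
  have key : ∀ ω, Z ω ^ 2 ≤ 2 * K ^ 2 * Real.exp (Z ω / K) - 2 * K ^ 2 - 2 * K * Z ω := by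
    intro ω
    have h1 := quad_le_exp (x := Z ω / K) (div_nonneg (hZnn ω) hK.le)
    have h4 := mul_le_mul_of_nonneg_left h1 (show (0:ℝ) ≤ 2*K^2 by positivity)
    have e1 : 2*K^2*(1 + Z ω/K + (Z ω/K)^2/2) = 2*K^2 + 2*K*Z ω + Z ω^2 := by
      field_simp
    linarith [h4, e1]
  calc ∫ ω, Z ω ^ 2 ∂μ
      ≤ ∫ ω, (2 * K ^ 2 * Real.exp (Z ω / K) - 2 * K ^ 2 - 2 * K * Z ω) ∂μ := by
        refine integral_mono (intZsq hZm hZnn hK hexp) ?_ key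
        exact (((intE hZm hK hexp).const_mul _).sub (integrable_const _)).sub
          ((intZ hZm hZnn hK hexp).const_mul _)
    _ = 2 * K ^ 2 * ∫ ω, Real.exp (Z ω / K) ∂μ - 2 * K ^ 2 - 2 * K * ∫ ω, Z ω ∂μ := by
        rw [integral_sub, integral_sub, integral_const_mul, integral_const_mul, integral_const]
        · simp [integral_const_mul]
        · exact (intE hZm hK hexp).const_mul _
        · exact integrable_const _
        · exact ((intE hZm hK hexp).const_mul _).sub (integrable_const _)
        · exact (intZ hZm hZnn hK hexp).const_mul _
    _ ≤ 2 * K ^ 2 := by nlinarith [intE_le hZm hK hexp, sq_nonneg K]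

lemma intexp (hZm : Measurable Z) (hZnn : ∀ ω, 0 ≤ Z ω) (hK : 0 < K)
    (hexp : ∫⁻ ω, ENNReal.ofReal (Real.exp (Z ω / K)) ∂μ ≤ 2)
    {lam : ℝ} (hlam : lam * K ≤ 1) :
    Integrable (fun ω => Real.exp (lam * Z ω)) μ := by
  refine Integrable.mono' ((intE hZm hK hexp).add (integrable_const 1))
    ((hZm.const_mul lam).exp.aestronglyMeasurable) (Filter.Eventually.of_forall fun ω => ?_)
  rw [Real.norm_of_nonneg (Real.exp_nonneg _)]
  simp only [Pi.add_apply]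
  rcases le_or_gt lam 0 with h | h
  · have : Real.exp (lam * Z ω) ≤ 1 := Real.exp_le_one_iff.2 (mul_nonpos_of_nonpos_of_nonneg h (hZnn ω))
    linarith [Real.exp_nonneg (Z ω / K)]
  · have hle : lam * Z ω ≤ Z ω / K := by
      have hKinv : lam ≤ 1 / K := (le_div_iff₀ hK).2 hlam
      calc lam * Z ω ≤ (1 / K) * Z ω := mul_le_mul_of_nonneg_right hKinv (hZnn ω)
        _ = Z ω / K := by ring
    have := Real.exp_le_exp.2 hle
    linarith
end core

section core2
variable {Ω : Type*} [MeasurableSpace Ω] {μ : Measure Ω} [IsProbabilityMeasure μ]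
variable {Z : Ω → ℝ} {K : ℝ}

lemma mgf_up_one (hZm : Measurable Z) (hZnn : ∀ ω, 0 ≤ Z ω) (hK : 0 < K)
    (hexp : ∫⁻ ω, ENNReal.ofReal (Real.exp (Z ω / K)) ∂μ ≤ 2)
    {lam : ℝ} (h0 : 0 ≤ lam) (h1 : lam * K ≤ 1) :
    mgf Z μ lam ≤ Real.exp (lam * (∫ ω, Z ω ∂μ) + (lam * K) ^ 2) := by
  set m := ∫ ω, Z ω ∂μ with hm
  have hmnn : 0 ≤ m := integral_nonneg hZnn
  have key : ∀ ω, Real.exp (lam * Z ω)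
      ≤ 1 + lam * Z ω + (lam*K)^2 * (Real.exp (Z ω / K) - 1 - Z ω / K) := by
    intro ω
    have h := exp_theta_ineq (θ := lam*K) (x := Z ω / K)
      (mul_nonneg h0 hK.le) h1 (div_nonneg (hZnn ω) hK.le)
    have e : lam * K * (Z ω / K) = lam * Z ω := by field_simp
    rw [e] at h
    linarith
  have Ia : Integrable (fun ω => Real.exp (Z ω / K) - 1 - Z ω / K) μ := by
    exact ((intE hZm hK hexp).sub (integrable_const 1)).sub
      ((intZ hZm hZnn hK hexp).div_const K)
  have Ib : Integrable (fun ω => lam * Z ω) μ := (intZ hZm hZnn hK hexp).const_mul lam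
  have Ic : Integrable (fun ω => 1 + lam * Z ω) μ := (integrable_const 1).add Ib
  have Id : Integrable (fun ω => (lam*K)^2 * (Real.exp (Z ω / K) - 1 - Z ω / K)) μ :=
    Ia.const_mul _
  have hintR : Integrable (fun ω => 1 + lam * Z ω
      + (lam*K)^2 * (Real.exp (Z ω / K) - 1 - Z ω / K)) μ := Ic.add Id
  have i1 : ∫ ω, lam * Z ω ∂μ = lam * m := integral_const_mul lam Z
  have i2 : ∫ ω, Z ω / K ∂μ = m / K := integral_div K Z
  have Ie : Integrable (fun ω => Real.exp (Z ω / K) - 1) μ :=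
    (intE hZm hK hexp).sub (integrable_const 1)
  have If : Integrable (fun ω => Z ω / K) μ := (intZ hZm hZnn hK hexp).div_const K
  have i3 : ∫ ω, (Real.exp (Z ω / K) - 1 - Z ω / K) ∂μ
      = (∫ ω, Real.exp (Z ω / K) ∂μ) - 1 - m / K := by
    rw [integral_sub Ie If, integral_sub (intE hZm hK hexp) (integrable_const 1),
      integral_const, i2]
    simp
  have i4 : ∫ ω, (1 + lam * Z ω
      + (lam*K)^2 * (Real.exp (Z ω / K) - 1 - Z ω / K)) ∂μ
      = 1 + lam * m + (lam*K)^2 * ((∫ ω, Real.exp (Z ω / K) ∂μ) - 1 - m / K) := by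
    rw [integral_add Ic Id, integral_add (integrable_const 1) Ib,
      integral_const, i1, integral_const_mul, i3]
    simp
  have step1 : mgf Z μ lam ≤ 1 + lam * m + (lam*K)^2
      * ((∫ ω, Real.exp (Z ω / K) ∂μ) - 1 - m / K) := by
    rw [mgf, ← i4]
    exact integral_mono (intexp hZm hZnn hK hexp h1) hintR key
  have step2 : (lam*K)^2 * ((∫ ω, Real.exp (Z ω / K) ∂μ) - 1 - m / K) ≤ (lam*K)^2 := by
    have h2 := intE_le hZm hK hexp
    have h3 : 0 ≤ m / K := div_nonneg hmnn hK.le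
    nlinarith [sq_nonneg (lam*K)]
  calc mgf Z μ lam ≤ 1 + (lam * m + (lam*K)^2) := by linarith
    _ ≤ Real.exp (lam * m + (lam * K) ^ 2) := by
        linarith [Real.add_one_le_exp (lam * m + (lam * K) ^ 2)]

lemma mgf_dn_one (hZm : Measurable Z) (hZnn : ∀ ω, 0 ≤ Z ω) (hK : 0 < K)
    (hexp : ∫⁻ ω, ENNReal.ofReal (Real.exp (Z ω / K)) ∂μ ≤ 2)
    {lam : ℝ} (h0 : 0 ≤ lam) :
    mgf Z μ (-lam) ≤ Real.exp (-(lam * (∫ ω, Z ω ∂μ)) + (lam * K) ^ 2) := by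
  set m := ∫ ω, Z ω ∂μ with hm
  have key : ∀ ω, Real.exp (-lam * Z ω) ≤ 1 - lam * Z ω + lam^2 * Z ω ^ 2 / 2 := by
    intro ω
    have h := exp_neg_le_quad (y := lam * Z ω) (mul_nonneg h0 (hZnn ω))
    calc Real.exp (-lam * Z ω) = Real.exp (-(lam * Z ω)) := by ring_nf
      _ ≤ 1 - lam * Z ω + (lam * Z ω)^2/2 := h
      _ = 1 - lam * Z ω + lam^2 * Z ω ^ 2 / 2 := by ring
  have hintR : Integrable (fun ω => 1 - lam * Z ω + lam^2 * Z ω ^ 2 / 2) μ := by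
    refine ((integrable_const 1).sub ((intZ hZm hZnn hK hexp).const_mul lam)).add ?_
    exact ((intZsq hZm hZnn hK hexp).const_mul (lam^2)).div_const 2
  have Ib : Integrable (fun ω => lam * Z ω) μ := (intZ hZm hZnn hK hexp).const_mul lam
  have Ic : Integrable (fun ω => 1 - lam * Z ω) μ := (integrable_const 1).sub Ib
  have Id : Integrable (fun ω => lam^2 * Z ω ^ 2 / 2) μ :=
    ((intZsq hZm hZnn hK hexp).const_mul (lam^2)).div_const 2
  have i4 : ∫ ω, (1 - lam * Z ω + lam^2 * Z ω ^ 2 / 2) ∂μ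
      = 1 - lam * m + lam^2 * (∫ ω, Z ω ^ 2 ∂μ) / 2 := by
    rw [integral_add Ic Id, integral_sub (integrable_const 1) Ib,
      integral_const, integral_const_mul, integral_div, integral_const_mul]
    simp [hm]
  have hintL : Integrable (fun ω => Real.exp (-lam * Z ω)) μ := by
    refine intexp hZm hZnn hK hexp (lam := -lam) ?_
    nlinarith
  have step1 : mgf Z μ (-lam) ≤ 1 - lam * m + lam^2 * (∫ ω, Z ω ^ 2 ∂μ) / 2 := by
    rw [mgf, ← i4]
    exact integral_mono hintL hintR key
  have step2 : lam^2 * (∫ ω, Z ω ^ 2 ∂μ) / 2 ≤ (lam * K)^2 := by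
    have h2 := Zsq_le hZm hZnn hK hexp
    nlinarith [sq_nonneg lam, integral_nonneg (fun ω => sq_nonneg (Z ω)) (μ := μ) (f := fun ω => Z ω ^2)]
  calc mgf Z μ (-lam) ≤ 1 + (-(lam * m) + (lam*K)^2) := by linarith
    _ ≤ Real.exp (-(lam * m) + (lam * K) ^ 2) := by
        linarith [Real.add_one_le_exp (-(lam * m) + (lam * K) ^ 2)]
end core2

section tails
variable {Ω : Type*} [MeasurableSpace Ω] {μ : Measure Ω} [IsProbabilityMeasure μ]

lemma tail_up {n : ℕ} {Z : Fin n → Ω → ℝ} (hZm : ∀ i, Measurable (Z i))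
    (hZnn : ∀ i ω, 0 ≤ Z i ω)
    (hind : iIndepFun Z μ) {K : ℝ} (hK : 0 < K)
    (hexp : ∀ i, ∫⁻ ω, ENNReal.ofReal (Real.exp (Z i ω / K)) ∂μ ≤ 2)
    {m : ℝ} (hm : ∀ i, ∫ ω, Z i ω ∂μ = m)
    {t lam : ℝ} (h0 : 0 ≤ lam) (h1 : lam * K ≤ 1) :
    (μ {ω | t + n * m ≤ ∑ i, Z i ω}).toReal
      ≤ Real.exp (n * (lam * K) ^ 2 - lam * t) := by
  have hintsum : Integrable (fun ω => Real.exp (lam * (∑ i, Z i) ω)) μ :=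
    hind.integrable_exp_mul_sum hZm (fun i _ => intexp (hZm i) (hZnn i) hK (hexp i) h1)
  have hset : {ω | t + n * m ≤ ∑ i, Z i ω} = {ω | t + n * m ≤ (∑ i, Z i) ω} := by
    ext ω; simp [Finset.sum_apply]
  have hch := measure_ge_le_exp_mul_mgf (μ := μ) (X := ∑ i, Z i) (t + n * m) h0 hintsum
  rw [← hset] at hch
  have hmgf : mgf (∑ i, Z i) μ lam ≤ Real.exp (n * (lam * m + (lam * K) ^ 2)) := by
    rw [hind.mgf_sum hZm]
    calc ∏ i, mgf (Z i) μ lam ≤ ∏ _i : Fin n, Real.exp (lam * m + (lam * K) ^ 2) := by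
          refine Finset.prod_le_prod (fun i _ => mgf_nonneg) (fun i _ => ?_)
          have := mgf_up_one (hZm i) (hZnn i) hK (hexp i) h0 h1
          rwa [hm i] at this
      _ = Real.exp (n * (lam * m + (lam * K) ^ 2)) := by
          rw [Finset.prod_const, Finset.card_univ, Fintype.card_fin, ← Real.exp_nat_mul]
  calc (μ {ω | t + n * m ≤ ∑ i, Z i ω}).toReal
      ≤ Real.exp (-lam * (t + n * m)) * mgf (∑ i, Z i) μ lam := hch
    _ ≤ Real.exp (-lam * (t + n * m)) * Real.exp (n * (lam * m + (lam * K) ^ 2)) := by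
        exact mul_le_mul_of_nonneg_left hmgf (Real.exp_nonneg _)
    _ = Real.exp (n * (lam * K) ^ 2 - lam * t) := by
        rw [← Real.exp_add]; ring_nf

lemma tail_dn {n : ℕ} {Z : Fin n → Ω → ℝ} (hZm : ∀ i, Measurable (Z i))
    (hZnn : ∀ i ω, 0 ≤ Z i ω)
    (hind : iIndepFun Z μ) {K : ℝ} (hK : 0 < K)
    (hexp : ∀ i, ∫⁻ ω, ENNReal.ofReal (Real.exp (Z i ω / K)) ∂μ ≤ 2)
    {m : ℝ} (hm : ∀ i, ∫ ω, Z i ω ∂μ = m)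
    {t lam : ℝ} (h0 : 0 ≤ lam) :
    (μ {ω | t ≤ n * m - ∑ i, Z i ω}).toReal
      ≤ Real.exp (n * (lam * K) ^ 2 - lam * t) := by
  have h1' : (-lam) * K ≤ 1 := by nlinarith
  have hintsum : Integrable (fun ω => Real.exp (lam * (-(∑ i, Z i)) ω)) μ := by
    have := hind.integrable_exp_mul_sum (t := -lam) hZm (s := Finset.univ)
      (fun i _ => intexp (hZm i) (hZnn i) hK (hexp i) h1')
    refine this.congr (Filter.Eventually.of_forall fun ω => ?_)
    simp [neg_mul, mul_neg]
  have hset : {ω | t ≤ n * m - ∑ i, Z i ω} = {ω | t - n * m ≤ (-(∑ i, Z i)) ω} := by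
    ext ω; simp [Finset.sum_apply]; constructor <;> intro h <;> linarith
  have hch := measure_ge_le_exp_mul_mgf (μ := μ) (X := -(∑ i, Z i)) (t - n * m) h0 hintsum
  rw [← hset] at hch
  have hmgf : mgf (-(∑ i, Z i)) μ lam ≤ Real.exp (n * (-(lam * m) + (lam * K) ^ 2)) := by
    rw [mgf_neg, hind.mgf_sum hZm]
    calc ∏ i, mgf (Z i) μ (-lam) ≤ ∏ _i : Fin n, Real.exp (-(lam * m) + (lam * K) ^ 2) := by
          refine Finset.prod_le_prod (fun i _ => mgf_nonneg) (fun i _ => ?_)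
          have := mgf_dn_one (hZm i) (hZnn i) hK (hexp i) h0
          rwa [hm i] at this
      _ = Real.exp (n * (-(lam * m) + (lam * K) ^ 2)) := by
          rw [Finset.prod_const, Finset.card_univ, Fintype.card_fin, ← Real.exp_nat_mul]
  calc (μ {ω | t ≤ n * m - ∑ i, Z i ω}).toReal
      ≤ Real.exp (-lam * (t - n * m)) * mgf (-(∑ i, Z i)) μ lam := hch
    _ ≤ Real.exp (-lam * (t - n * m)) * Real.exp (n * (-(lam * m) + (lam * K) ^ 2)) := by
        exact mul_le_mul_of_nonneg_left hmgf (Real.exp_nonneg _)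
    _ = Real.exp (n * (lam * K) ^ 2 - lam * t) := by
        rw [← Real.exp_add]; ring_nf
end tails

section onevec
variable {Ω : Type*} [MeasurableSpace Ω] {μ : Measure Ω} [IsProbabilityMeasure μ]
variable {p n : ℕ} {X : Fin n → Ω → Fin p → ℝ} {L : ℝ}

lemma gmeas (a : Fin p → ℝ) : Measurable (fun v : Fin p → ℝ => (∑ j, a j * v j)^2) :=
  (Finset.univ.measurable_sum fun j _ => by fun_prop).pow_const 2

lemma Zmeas (hmeas : ∀ i, Measurable (X i)) (a : Fin p → ℝ) (i : Fin n) :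
    Measurable (fun ω => (∑ j, a j * X i ω j)^2) := (gmeas a).comp (hmeas i)

lemma Zindep (hmeas : ∀ i, Measurable (X i))
    (hindep : iIndepFun X μ) (a : Fin p → ℝ) :
    iIndepFun (fun i ω => (∑ j, a j * X i ω j)^2) μ :=
  hindep.comp (fun _ v => (∑ j, a j * v j)^2) (fun _ => gmeas a)

lemma Zexp (hL : 0 < L)
    (hsub : ∀ i, ∀ a : Fin p → ℝ, (∑ k, a k ^ 2) ≤ 1 →
      ∫⁻ ω, ENNReal.ofReal (Real.exp (((∑ k, a k * X i ω k) / L) ^ 2)) ∂μ ≤ 2)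
    (a : Fin p → ℝ) (ha : (∑ k, a k ^ 2) ≤ 1) (i : Fin n) :
    ∫⁻ ω, ENNReal.ofReal (Real.exp ((∑ j, a j * X i ω j)^2 / L^2)) ∂μ ≤ 2 := by
  have h := hsub i a ha
  simp only [div_pow] at h
  exact h

lemma onevec_up (hmeas : ∀ i, Measurable (X i))
    (hindep : iIndepFun X μ) (hL : 0 < L)
    (hsub : ∀ i, ∀ a : Fin p → ℝ, (∑ k, a k ^ 2) ≤ 1 →
      ∫⁻ ω, ENNReal.ofReal (Real.exp (((∑ k, a k * X i ω k) / L) ^ 2)) ∂μ ≤ 2)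
    (a : Fin p → ℝ) (ha : (∑ k, a k ^ 2) ≤ 1)
    {m : ℝ} (hm : ∀ i, ∫ ω, (∑ j, a j * X i ω j)^2 ∂μ = m)
    {t lam : ℝ} (h0 : 0 ≤ lam) (h1 : lam * L^2 ≤ 1) :
    (μ {ω | t + n * m ≤ ∑ i, (∑ j, a j * X i ω j)^2}).toReal
      ≤ Real.exp (n * (lam * L^2) ^ 2 - lam * t) := by
  exact tail_up (Z := fun i ω => (∑ j, a j * X i ω j)^2) (Zmeas hmeas a)
    (fun i ω => sq_nonneg _) (Zindep hmeas hindep a) (by positivity)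
    (Zexp hL hsub a ha) hm h0 h1

lemma onevec_dn (hmeas : ∀ i, Measurable (X i))
    (hindep : iIndepFun X μ) (hL : 0 < L)
    (hsub : ∀ i, ∀ a : Fin p → ℝ, (∑ k, a k ^ 2) ≤ 1 →
      ∫⁻ ω, ENNReal.ofReal (Real.exp (((∑ k, a k * X i ω k) / L) ^ 2)) ∂μ ≤ 2)
    (a : Fin p → ℝ) (ha : (∑ k, a k ^ 2) ≤ 1)
    {m : ℝ} (hm : ∀ i, ∫ ω, (∑ j, a j * X i ω j)^2 ∂μ = m)
    {t lam : ℝ} (h0 : 0 ≤ lam) :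
    (μ {ω | t ≤ n * m - ∑ i, (∑ j, a j * X i ω j)^2}).toReal
      ≤ Real.exp (n * (lam * L^2) ^ 2 - lam * t) := by
  exact tail_dn (Z := fun i ω => (∑ j, a j * X i ω j)^2) (Zmeas hmeas a)
    (fun i ω => sq_nonneg _) (Zindep hmeas hindep a) (by positivity)
    (Zexp hL hsub a ha) hm h0

lemma intZa (hmeas : ∀ i, Measurable (X i)) (hL : 0 < L)
    (hsub : ∀ i, ∀ a : Fin p → ℝ, (∑ k, a k ^ 2) ≤ 1 →
      ∫⁻ ω, ENNReal.ofReal (Real.exp (((∑ k, a k * X i ω k) / L) ^ 2)) ∂μ ≤ 2)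
    (a : Fin p → ℝ) (ha : (∑ k, a k ^ 2) ≤ 1) (i : Fin n) :
    Integrable (fun ω => (∑ j, a j * X i ω j)^2) μ :=
  intZ (Zmeas hmeas a i) (fun ω => sq_nonneg _) (by positivity) (Zexp hL hsub a ha i)
end onevec

section vecs
variable {p : ℕ}

lemma sum_one (k : Fin p) (v : Fin p → ℝ) :
    ∑ j, (if j = k then (1:ℝ) else 0) * v j = v k := by
  rw [Finset.sum_congr rfl (fun j _ => show (if j = k then (1:ℝ) else 0) * v j
    = if j = k then v j else 0 by split <;> simp)]
  simp

lemma sumsq_one (k : Fin p) :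
    ∑ j, (if j = k then (1:ℝ) else 0) ^ 2 = 1 := by
  rw [Finset.sum_congr rfl (fun j _ => show (if j = k then (1:ℝ) else 0) ^ 2
    = if j = k then 1 else 0 by split <;> simp)]
  simp

lemma sum_two {k l : Fin p} (hkl : k ≠ l) (c d : ℝ) (v : Fin p → ℝ) :
    ∑ j, (if j = k then c else if j = l then d else 0) * v j = c * v k + d * v l := by
  rw [Finset.sum_congr rfl (fun j _ => show (if j = k then c else if j = l then d else 0) * v j
      = (if j = k then c * v j else 0) + (if j = l then d * v j else 0) by
    by_cases h1 : j = k
    · subst h1; simp [hkl]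
    · by_cases h2 : j = l
      · subst h2; simp [h1]
      · simp [h1, h2])]
  rw [Finset.sum_add_distrib]
  simp

lemma sumsq_two {k l : Fin p} (hkl : k ≠ l) (c d : ℝ) :
    ∑ j, (if j = k then c else if j = l then d else 0) ^ 2 = c ^ 2 + d ^ 2 := by
  rw [Finset.sum_congr rfl (fun j _ => show (if j = k then c else if j = l then d else 0) ^ 2
      = (if j = k then c ^ 2 else 0) + (if j = l then d ^ 2 else 0) by
    by_cases h1 : j = k
    · subst h1; simp [hkl]
    · by_cases h2 : j = l
      · subst h2; simp [h1]
      · simp [h1, h2])]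
  rw [Finset.sum_add_distrib]
  simp
end vecs

section pair
variable {Ω : Type*} [MeasurableSpace Ω] {μ : Measure Ω} [IsProbabilityMeasure μ]
variable {p n : ℕ} {X : Fin n → Ω → Fin p → ℝ} {L : ℝ}

lemma intXkk (hmeas : ∀ i, Measurable (X i)) (hL : 0 < L)
    (hsub : ∀ i, ∀ a : Fin p → ℝ, (∑ k, a k ^ 2) ≤ 1 →
      ∫⁻ ω, ENNReal.ofReal (Real.exp (((∑ k, a k * X i ω k) / L) ^ 2)) ∂μ ≤ 2)
    (i : Fin n) (k : Fin p) :
    Integrable (fun ω => X i ω k * X i ω k) μ := by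
  refine (intZa hmeas hL hsub (fun j => if j = k then (1:ℝ) else 0)
    (le_of_eq (sumsq_one k)) i).congr (Filter.Eventually.of_forall fun ω => ?_)
  dsimp only
  rw [sum_one]; ring

lemma intXkl (hmeas : ∀ i, Measurable (X i)) (hL : 0 < L)
    (hsub : ∀ i, ∀ a : Fin p → ℝ, (∑ k, a k ^ 2) ≤ 1 →
      ∫⁻ ω, ENNReal.ofReal (Real.exp (((∑ k, a k * X i ω k) / L) ^ 2)) ∂μ ≤ 2)
    (i : Fin n) (k l : Fin p) :
    Integrable (fun ω => X i ω k * X i ω l) μ := by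
  have hg : Integrable (fun ω => (X i ω k * X i ω k + X i ω l * X i ω l) / 2) μ :=
    ((intXkk hmeas hL hsub i k).add (intXkk hmeas hL hsub i l)).div_const 2
  refine Integrable.mono' hg
    ((((measurable_pi_apply k).comp (hmeas i)).mul
      ((measurable_pi_apply l).comp (hmeas i))).aestronglyMeasurable)
    (Filter.Eventually.of_forall fun ω => ?_)
  have h1 := sq_nonneg (X i ω k - X i ω l)
  have h2 := sq_nonneg (X i ω k + X i ω l)
  rw [Real.norm_eq_abs, abs_le]
  constructor <;> nlinarith

lemma m_comp (hmeas : ∀ i, Measurable (X i)) (hL : 0 < L)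
    (hsub : ∀ i, ∀ a : Fin p → ℝ, (∑ k, a k ^ 2) ≤ 1 →
      ∫⁻ ω, ENNReal.ofReal (Real.exp (((∑ k, a k * X i ω k) / L) ^ 2)) ∂μ ≤ 2)
    {Sstar : Fin p → Fin p → ℝ}
    (hSstar : ∀ i k l, Sstar k l = ∫ ω, X i ω k * X i ω l ∂μ)
    (i : Fin n) (k l : Fin p) (c d : ℝ) :
    ∫ ω, (c * X i ω k + d * X i ω l)^2 ∂μ
      = c^2 * Sstar k k + (2*c*d) * Sstar k l + d^2 * Sstar l l := by
  have I1 : Integrable (fun ω => c^2 * (X i ω k * X i ω k)) μ :=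
    (intXkk hmeas hL hsub i k).const_mul _
  have I2 : Integrable (fun ω => (2*c*d) * (X i ω k * X i ω l)) μ :=
    (intXkl hmeas hL hsub i k l).const_mul _
  have I3 : Integrable (fun ω => d^2 * (X i ω l * X i ω l)) μ :=
    (intXkk hmeas hL hsub i l).const_mul _
  calc ∫ ω, (c * X i ω k + d * X i ω l)^2 ∂μ
      = ∫ ω, (c^2 * (X i ω k * X i ω k) + (2*c*d) * (X i ω k * X i ω l)
          + d^2 * (X i ω l * X i ω l)) ∂μ := by
        refine integral_congr_ae (Filter.Eventually.of_forall fun ω => ?_)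
        ring
    _ = c^2 * Sstar k k + (2*c*d) * Sstar k l + d^2 * Sstar l l := by
        have I12 : Integrable (fun ω => c^2 * (X i ω k * X i ω k)
            + (2*c*d) * (X i ω k * X i ω l)) μ := I1.add I2
        rw [integral_add I12 I3, integral_add I1 I2,
          integral_const_mul, integral_const_mul, integral_const_mul,
          ← hSstar i k k, ← hSstar i k l, ← hSstar i l l]

lemma pair_bound (hn : 0 < n) (hmeas : ∀ i, Measurable (X i))
    (hindep : iIndepFun X μ) (hL : 0 < L)
    (hsub : ∀ i, ∀ a : Fin p → ℝ, (∑ k, a k ^ 2) ≤ 1 →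
      ∫⁻ ω, ENNReal.ofReal (Real.exp (((∑ k, a k * X i ω k) / L) ^ 2)) ∂μ ≤ 2)
    {Sstar : Fin p → Fin p → ℝ}
    (hSstar : ∀ i k l, Sstar k l = ∫ ω, X i ω k * X i ω l ∂μ)
    {δ u' : ℝ}
    (hup : ∃ lam, 0 ≤ lam ∧ lam * L^2 ≤ 1 ∧
      (n:ℝ)*(lam*L^2)^2 - lam*((n:ℝ)*δ) ≤ -u')
    (hdn : ∃ lam, 0 ≤ lam ∧ (n:ℝ)*(lam*L^2)^2 - lam*((n:ℝ)*δ) ≤ -u')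
    (k l : Fin p) :
    μ {ω | δ ≤ |(1 / n : ℝ) * ∑ i, X i ω k * X i ω l - Sstar k l|}
      ≤ 4 * ENNReal.ofReal (Real.exp (-u')) := by
  have hnR : (0:ℝ) < n := by exact_mod_cast hn
  have evb : ∀ E : Set Ω, (μ E).toReal ≤ Real.exp (-u') →
      μ E ≤ ENNReal.ofReal (Real.exp (-u')) := fun E hE =>
    (ENNReal.le_ofReal_iff_toReal_le (measure_ne_top μ E) (Real.exp_nonneg _)).2 hE
  have up : ∀ (a : Fin p → ℝ), (∑ j, a j ^ 2) ≤ 1 → ∀ (m : ℝ),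
      (∀ i, ∫ ω, (∑ j, a j * X i ω j)^2 ∂μ = m) →
      μ {ω | (n:ℝ)*δ + (n:ℝ)*m ≤ ∑ i, (∑ j, a j * X i ω j)^2}
        ≤ ENNReal.ofReal (Real.exp (-u')) := by
    intro a ha m hm
    obtain ⟨lam, h0, h1, h2⟩ := hup
    refine evb _ ((onevec_up hmeas hindep hL hsub a ha hm h0 h1).trans ?_)
    exact Real.exp_le_exp.2 h2
  have dn : ∀ (a : Fin p → ℝ), (∑ j, a j ^ 2) ≤ 1 → ∀ (m : ℝ),
      (∀ i, ∫ ω, (∑ j, a j * X i ω j)^2 ∂μ = m) →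
      μ {ω | (n:ℝ)*δ ≤ (n:ℝ)*m - ∑ i, (∑ j, a j * X i ω j)^2}
        ≤ ENNReal.ofReal (Real.exp (-u')) := by
    intro a ha m hm
    obtain ⟨lam, h0, h1⟩ := hdn
    refine evb _ ((onevec_dn hmeas hindep hL hsub a ha hm h0).trans ?_)
    exact Real.exp_le_exp.2 h1
  by_cases hkl : k = l
  · -- diagonal case
    subst hkl
    set a : Fin p → ℝ := fun j => if j = k then (1:ℝ) else 0 with ha_def
    have ha : (∑ j, a j ^ 2) ≤ 1 := le_of_eq (sumsq_one k)
    have hm : ∀ i, ∫ ω, (∑ j, a j * X i ω j)^2 ∂μ = Sstar k k := by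
      intro i
      rw [hSstar i k k]
      refine integral_congr_ae (Filter.Eventually.of_forall fun ω => ?_)
      dsimp only [ha_def]
      rw [sum_one]; ring
    have hincl : {ω | δ ≤ |(1 / n : ℝ) * ∑ i, X i ω k * X i ω k - Sstar k k|}
        ⊆ {ω | (n:ℝ)*δ + (n:ℝ)*(Sstar k k) ≤ ∑ i, (∑ j, a j * X i ω j)^2}
          ∪ {ω | (n:ℝ)*δ ≤ (n:ℝ)*(Sstar k k) - ∑ i, (∑ j, a j * X i ω j)^2} := by
      intro ω hω
      simp only [Set.mem_setOf_eq] at hω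
      have hsum : ∑ i, X i ω k * X i ω k = ∑ i, (∑ j, a j * X i ω j)^2 :=
        Finset.sum_congr rfl fun i _ => by simp only [ha_def]; rw [sum_one]; ring
      rw [hsum] at hω
      set S := ∑ i, (∑ j, a j * X i ω j)^2 with hS
      have hSn : (1/(n:ℝ)) * S * (n:ℝ) = S := by field_simp
      rcases le_abs.1 hω with h | h
      · left
        simp only [Set.mem_setOf_eq]
        nlinarith [mul_le_mul_of_nonneg_right
          (show δ + Sstar k k ≤ (1/(n:ℝ))*S from by linarith) hnR.le]
      · right
        simp only [Set.mem_setOf_eq]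
        nlinarith [mul_le_mul_of_nonneg_right
          (show δ - Sstar k k ≤ -((1/(n:ℝ))*S) from by linarith) hnR.le]
    calc μ {ω | δ ≤ |(1 / n : ℝ) * ∑ i, X i ω k * X i ω k - Sstar k k|}
        ≤ μ ({ω | (n:ℝ)*δ + (n:ℝ)*(Sstar k k) ≤ ∑ i, (∑ j, a j * X i ω j)^2}
          ∪ {ω | (n:ℝ)*δ ≤ (n:ℝ)*(Sstar k k) - ∑ i, (∑ j, a j * X i ω j)^2}) :=
          measure_mono hincl
      _ ≤ _ + _ := measure_union_le _ _
      _ ≤ ENNReal.ofReal (Real.exp (-u')) + ENNReal.ofReal (Real.exp (-u')) :=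
          add_le_add (up a ha _ hm) (dn a ha _ hm)
      _ ≤ 4 * ENNReal.ofReal (Real.exp (-u')) := by
          rw [← two_mul]
          exact mul_le_mul_left (by norm_num) _
  · -- off-diagonal case
    set c : ℝ := (Real.sqrt 2)⁻¹ with hc_def
    have hc2 : c^2 = 1/2 := by
      rw [hc_def, inv_pow, Real.sq_sqrt (by norm_num : (0:ℝ) ≤ 2)]
      norm_num
    set a : Fin p → ℝ := fun j => if j = k then c else if j = l then c else 0 with ha_def
    set b : Fin p → ℝ := fun j => if j = k then c else if j = l then -c else 0 with hb_def
    have ha : (∑ j, a j ^ 2) ≤ 1 := by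
      simp only [ha_def]; rw [sumsq_two hkl, hc2]; norm_num
    have hb : (∑ j, b j ^ 2) ≤ 1 := by
      simp only [hb_def]; rw [sumsq_two hkl]; nlinarith [hc2]
    have hYa : ∀ i ω, ∑ j, a j * X i ω j = c * X i ω k + c * X i ω l := by
      intro i ω; simp only [ha_def]; exact sum_two hkl c c _
    have hYb : ∀ i ω, ∑ j, b j * X i ω j = c * X i ω k + (-c) * X i ω l := by
      intro i ω; simp only [hb_def]; exact sum_two hkl c (-c) _
    set mA : ℝ := c^2 * Sstar k k + (2*c*c) * Sstar k l + c^2 * Sstar l l with hmA_def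
    set mB : ℝ := c^2 * Sstar k k + (2*c*(-c)) * Sstar k l + (-c)^2 * Sstar l l with hmB_def
    have hma : ∀ i, ∫ ω, (∑ j, a j * X i ω j)^2 ∂μ = mA := by
      intro i
      rw [hmA_def, ← m_comp hmeas hL hsub hSstar i k l c c]
      refine integral_congr_ae (Filter.Eventually.of_forall fun ω => ?_)
      dsimp only
      rw [hYa]
    have hmb : ∀ i, ∫ ω, (∑ j, b j * X i ω j)^2 ∂μ = mB := by
      intro i
      rw [hmB_def, ← m_comp hmeas hL hsub hSstar i k l c (-c)]
      refine integral_congr_ae (Filter.Eventually.of_forall fun ω => ?_)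
      dsimp only
      rw [hYb]
    have hmAB : mA - mB = 2 * Sstar k l := by
      rw [hmA_def, hmB_def]
      linear_combination (4 * Sstar k l) * hc2
    have hincl : {ω | δ ≤ |(1 / n : ℝ) * ∑ i, X i ω k * X i ω l - Sstar k l|}
        ⊆ ({ω | (n:ℝ)*δ + (n:ℝ)*mA ≤ ∑ i, (∑ j, a j * X i ω j)^2}
            ∪ {ω | (n:ℝ)*δ ≤ (n:ℝ)*mB - ∑ i, (∑ j, b j * X i ω j)^2})
          ∪ ({ω | (n:ℝ)*δ + (n:ℝ)*mB ≤ ∑ i, (∑ j, b j * X i ω j)^2}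
            ∪ {ω | (n:ℝ)*δ ≤ (n:ℝ)*mA - ∑ i, (∑ j, a j * X i ω j)^2}) := by
      intro ω hω
      simp only [Set.mem_setOf_eq] at hω
      set SA := ∑ i, (∑ j, a j * X i ω j)^2 with hSA
      set SB := ∑ i, (∑ j, b j * X i ω j)^2 with hSB
      have hprod : ∑ i, X i ω k * X i ω l = (SA - SB)/2 := by
        rw [hSA, hSB, eq_div_iff (by norm_num : (2:ℝ) ≠ 0), ← Finset.sum_sub_distrib,
          Finset.sum_mul]
        refine Finset.sum_congr rfl fun i _ => ?_
        rw [hYa, hYb]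
        linear_combination (-4 * X i ω k * X i ω l) * hc2
      rw [hprod] at hω
      have hT : (1 / (n:ℝ)) * ((SA - SB)/2) - Sstar k l
          = ((SA - (n:ℝ)*mA) - (SB - (n:ℝ)*mB))/(2*(n:ℝ)) := by
        have h2s : Sstar k l = (mA - mB)/2 := by rw [hmAB]; ring
        rw [h2s]; field_simp; ring
      rw [hT] at hω
      by_contra hcon
      simp only [Set.mem_union, Set.mem_setOf_eq, not_or, not_le] at hcon
      obtain ⟨⟨h1, h2⟩, ⟨h3, h4⟩⟩ := hcon
      have habs : |((SA - (n:ℝ)*mA) - (SB - (n:ℝ)*mB))/(2*(n:ℝ))| < δ := by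
        rw [abs_lt]
        constructor
        · rw [lt_div_iff₀ (by positivity)]
          nlinarith
        · rw [div_lt_iff₀ (by positivity)]
          nlinarith
      linarith
    calc μ {ω | δ ≤ |(1 / n : ℝ) * ∑ i, X i ω k * X i ω l - Sstar k l|}
        ≤ μ (({ω | (n:ℝ)*δ + (n:ℝ)*mA ≤ ∑ i, (∑ j, a j * X i ω j)^2}
            ∪ {ω | (n:ℝ)*δ ≤ (n:ℝ)*mB - ∑ i, (∑ j, b j * X i ω j)^2})
          ∪ ({ω | (n:ℝ)*δ + (n:ℝ)*mB ≤ ∑ i, (∑ j, b j * X i ω j)^2}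
            ∪ {ω | (n:ℝ)*δ ≤ (n:ℝ)*mA - ∑ i, (∑ j, a j * X i ω j)^2})) :=
          measure_mono hincl
      _ ≤ _ + _ := measure_union_le _ _
      _ ≤ (ENNReal.ofReal (Real.exp (-u')) + ENNReal.ofReal (Real.exp (-u')))
          + (ENNReal.ofReal (Real.exp (-u')) + ENNReal.ofReal (Real.exp (-u'))) := by
          refine add_le_add ((measure_union_le _ _).trans ?_)
            ((measure_union_le _ _).trans ?_)
          · exact add_le_add (up a ha _ hma) (dn b hb _ hmb)
          · exact add_le_add (up b hb _ hmb) (dn a ha _ hma)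
      _ = 4 * ENNReal.ofReal (Real.exp (-u')) := by ring
end pair

/-- Let X₁, …, X_s be i.i.d. random vectors in ℝ^p satisfying the sub-Gaussian vector
condition with constant L > 0, and let Σ* = E[X₁X₁ᵀ]. Then for every χ > 0, with
δ_s(χ) = 2L²((2·log p + χ)/s + √((4·log p + 2χ)/s)),
P(max_{k,l} |(1/s)·Σᵢ X_{i,k}X_{i,l} − Σ*_{kl}| ≥ δ_s(χ)) ≤ 2e^{−χ}. -/
theorem empirical_covariance_concentration {Ω : Type*} [MeasurableSpace Ω]
    (μ : Measure Ω) [IsProbabilityMeasure μ]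
    (p s : ℕ) (hs : 0 < s) (X : Fin s → Ω → Fin p → ℝ)
    (hmeas : ∀ i, Measurable (X i))
    (hindep : iIndepFun X μ)
    (hident : ∀ i j, μ.map (X i) = μ.map (X j))
    (L : ℝ) (hL : 0 < L)
    (hsub : ∀ i, ∀ a : Fin p → ℝ, (∑ k, a k ^ 2) ≤ 1 →
      ∫⁻ ω, ENNReal.ofReal (Real.exp (((∑ k, a k * X i ω k) / L) ^ 2)) ∂μ ≤ 2)
    (Sstar : Fin p → Fin p → ℝ)
    (hSstar : ∀ i k l, Sstar k l = ∫ ω, X i ω k * X i ω l ∂μ)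
    (χ : ℝ) (hχ : 0 < χ) :
    (μ {ω | ∃ k l,
        2 * L ^ 2 * ((2 * Real.log p + χ) / s + Real.sqrt ((4 * Real.log p + 2 * χ) / s))
          ≤ |(1 / s : ℝ) * ∑ i, X i ω k * X i ω l - Sstar k l|}).toReal
      ≤ 2 * Real.exp (-χ) := by
  rcases Nat.eq_zero_or_pos p with hp0 | hp
  · subst hp0
    have hempty : {ω : Ω | ∃ k l : Fin 0,
        2 * L ^ 2 * ((2 * Real.log (0:ℕ) + χ) / s + Real.sqrt ((4 * Real.log (0:ℕ) + 2 * χ) / s))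
          ≤ |(1 / s : ℝ) * ∑ i, X i ω k * X i ω l - Sstar k l|} = ∅ := by
      ext ω; simp [Fin.isEmpty]
    rw [hempty]
    simp
    positivity
  rcases le_or_gt χ (Real.log 2) with hχ2 | hχ2
  · have h2 : (1:ℝ) ≤ 2 * Real.exp (-χ) := by
      have h3 : Real.exp (-Real.log 2) ≤ Real.exp (-χ) := Real.exp_le_exp.2 (by linarith)
      rw [Real.exp_neg, Real.exp_log (by norm_num : (0:ℝ) < 2)] at h3
      linarith
    refine le_trans ?_ h2
    calc (μ _).toReal ≤ (μ Set.univ).toReal :=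
        ENNReal.toReal_mono (measure_ne_top μ _) (measure_mono (Set.subset_univ _))
      _ = 1 := by simp
  · -- main case
    have hsR : (0:ℝ) < s := by exact_mod_cast hs
    have hs1 : (1:ℝ) ≤ s := by exact_mod_cast hs
    have hp1 : (1:ℝ) ≤ (p:ℝ) := by exact_mod_cast hp
    have hppos : (0:ℝ) < p := by linarith
    have hKpos : (0:ℝ) < L^2 := by positivity
    set u : ℝ := 2*Real.log p + χ with hu_def
    have hlogp : 0 ≤ Real.log p := Real.log_nonneg hp1
    have hlog2pos : 0 < Real.log 2 := Real.log_pos one_lt_two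
    have hlog2le1 : Real.log 2 ≤ 1 := by
      have := Real.log_le_sub_one_of_pos (by norm_num : (0:ℝ) < 2); linarith
    have hugt : Real.log 2 < u := by rw [hu_def]; linarith
    have hupos : 0 < u := lt_trans hlog2pos hugt
    set u' : ℝ := u + Real.log 2 with hu'_def
    have hu'pos : 0 < u' := by rw [hu'_def]; linarith
    have hu'le : u' ≤ 2*u := by rw [hu'_def]; linarith
    set r : ℝ := Real.sqrt (2*u/s) with hr_def
    have hr0 : 0 ≤ r := Real.sqrt_nonneg _
    have hrsq : r^2 = 2*u/s := Real.sq_sqrt (by positivity)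
    set δ : ℝ := 2*L^2*(u/s + r) with hδ_def
    have husr : 0 < u/(s:ℝ) + r := by
      have : 0 < u/(s:ℝ) := div_pos hupos hsR
      linarith
    have hδpos : 0 < δ := by
      rw [hδ_def]
      exact mul_pos (by positivity) husr
    clear_value u u' r δ
    have hsd2 : 4*(L^2)^2*u' ≤ (s:ℝ)*δ^2 := by
      have e1 : (s:ℝ)*r^2 = 2*u := by rw [hrsq]; field_simp
      have e2 : (s:ℝ)*δ^2 = 4*(L^2)^2*(u^2/s + 2*u*r + s*r^2) := by
        rw [hδ_def]; field_simp; ring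
      rw [e2, e1]
      have h3 : (0:ℝ) ≤ u^2/(s:ℝ) := by positivity
      have h4 : (0:ℝ) ≤ u*r := mul_nonneg hupos.le hr0
      calc 4*(L^2)^2*u' ≤ 4*(L^2)^2*(2*u) := mul_le_mul_of_nonneg_left hu'le (by positivity)
        _ ≤ 4*(L^2)^2*(u^2/(s:ℝ) + 2*u*r + 2*u) := by
            apply mul_le_mul_of_nonneg_left _ (by positivity)
            linarith
    have hdn : ∃ lam, 0 ≤ lam ∧ (s:ℝ)*(lam*L^2)^2 - lam*((s:ℝ)*δ) ≤ -u' := by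
      refine ⟨δ/(2*(L^2)^2), by positivity, ?_⟩
      have e : (s:ℝ)*((δ/(2*(L^2)^2))*L^2)^2 - (δ/(2*(L^2)^2))*((s:ℝ)*δ)
          = -((s:ℝ)*δ^2/(4*(L^2)^2)) := by
        field_simp; ring
      rw [e]
      have : u' ≤ (s:ℝ)*δ^2/(4*(L^2)^2) := by
        rw [le_div_iff₀ (by positivity)]
        linarith [hsd2]
      linarith
    have hup : ∃ lam, 0 ≤ lam ∧ lam * L^2 ≤ 1 ∧
        (s:ℝ)*(lam*L^2)^2 - lam*((s:ℝ)*δ) ≤ -u' := by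
      by_cases hcase : δ ≤ 2*L^2
      · refine ⟨δ/(2*(L^2)^2), by positivity, ?_, ?_⟩
        · have e : (δ/(2*(L^2)^2))*L^2 = δ/(2*L^2) := by field_simp
          rw [e, div_le_one (by positivity)]
          exact hcase
        · have e : (s:ℝ)*((δ/(2*(L^2)^2))*L^2)^2 - (δ/(2*(L^2)^2))*((s:ℝ)*δ)
              = -((s:ℝ)*δ^2/(4*(L^2)^2)) := by
            field_simp; ring
          rw [e]
          have : u' ≤ (s:ℝ)*δ^2/(4*(L^2)^2) := by
            rw [le_div_iff₀ (by positivity)]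
            linarith [hsd2]
          linarith
      · push_neg at hcase
        refine ⟨1/L^2, by positivity, by field_simp; exact le_refl _, ?_⟩
        have hsr : (s:ℝ)*r = Real.sqrt (2*u*(s:ℝ)) := by
          have e1 : (s:ℝ)*r = Real.sqrt ((s:ℝ)^2*(2*u/s)) := by
            rw [Real.sqrt_mul (sq_nonneg _), Real.sqrt_sq hsR.le, hr_def]
          rw [e1]
          congr 1
          field_simp
        have hbr : (s:ℝ) < u + (s:ℝ)*r := by
          have hcase' : 2*L^2 < 2*L^2*(u/(s:ℝ)+r) := by rw [← hδ_def]; exact hcase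
          have h1 : 1 < u/(s:ℝ) + r := by
            have h2 : 2*L^2*1 < 2*L^2*(u/(s:ℝ)+r) := by rw [mul_one]; exact hcase'
            exact (mul_lt_mul_iff_right₀ (by positivity : (0:ℝ) < 2*L^2)).1 h2
          have e : (u/(s:ℝ))*(s:ℝ) = u := by field_simp
          nlinarith [mul_lt_mul_of_pos_right h1 hsR]
        have hsrlog : Real.log 2 ≤ (s:ℝ)*r := by
          rw [hsr]
          have h1 : (Real.log 2)^2 ≤ 2*u*(s:ℝ) := by
            calc (Real.log 2)^2 ≤ Real.log 2 * 1 := by nlinarith [hlog2pos, hlog2le1]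
              _ ≤ u := by linarith
              _ = u * 1 := by ring
              _ ≤ u * (s:ℝ) := by nlinarith [hupos, hs1]
              _ ≤ 2*u*(s:ℝ) := by nlinarith [hupos, hsR]
          calc Real.log 2 = Real.sqrt ((Real.log 2)^2) := (Real.sqrt_sq hlog2pos.le).symm
            _ ≤ Real.sqrt (2*u*(s:ℝ)) := Real.sqrt_le_sqrt h1
        have hsδ : (s:ℝ)*δ = 2*L^2*(u + (s:ℝ)*r) := by
          rw [hδ_def]; field_simp
        have key : L^2*((s:ℝ) + u') ≤ (s:ℝ)*δ := by
          rw [hsδ, hu'_def]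
          nlinarith [hKpos.le]
        have e : (s:ℝ)*((1/L^2)*L^2)^2 - (1/L^2)*((s:ℝ)*δ) = (s:ℝ) - (s:ℝ)*δ/L^2 := by
          field_simp
        rw [e]
        have : (s:ℝ) + u' ≤ (s:ℝ)*δ/L^2 := by
          rw [le_div_iff₀ hKpos]
          nlinarith [key]
        linarith
    -- assemble
    have hargs : (4 * Real.log p + 2 * χ) / (s:ℝ) = 2*u/(s:ℝ) := by rw [hu_def]; ring
    have hδeq : 2*L^2*(u/(s:ℝ) + Real.sqrt ((4 * Real.log p + 2 * χ) / (s:ℝ))) = δ := by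
      rw [hargs, ← hr_def, hδ_def]
    have hBkl := pair_bound (μ := μ) hs hmeas hindep hL hsub hSstar hup hdn
    have hUnion : {ω : Ω | ∃ k l, δ ≤ |(1 / s : ℝ) * ∑ i, X i ω k * X i ω l - Sstar k l|}
        = ⋃ k, ⋃ l, {ω : Ω | δ ≤ |(1 / s : ℝ) * ∑ i, X i ω k * X i ω l - Sstar k l|} := by
      ext ω; simp [Set.mem_iUnion]
    have hmain : μ {ω : Ω | ∃ k l, δ ≤ |(1 / s : ℝ) * ∑ i, X i ω k * X i ω l - Sstar k l|}
        ≤ ENNReal.ofReal ((p:ℝ)*((p:ℝ)*(4*Real.exp (-u')))) := by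
      calc μ {ω : Ω | ∃ k l, δ ≤ |(1 / s : ℝ) * ∑ i, X i ω k * X i ω l - Sstar k l|}
          ≤ ∑' (k : Fin p), μ (⋃ l, {ω : Ω | δ ≤
              |(1 / s : ℝ) * ∑ i, X i ω k * X i ω l - Sstar k l|}) := by
            rw [hUnion]; exact measure_iUnion_le _
        _ ≤ ∑' (k : Fin p), ∑' (l : Fin p), μ {ω : Ω | δ ≤
              |(1 / s : ℝ) * ∑ i, X i ω k * X i ω l - Sstar k l|} :=
            ENNReal.tsum_le_tsum (fun k => measure_iUnion_le _)
        _ ≤ ∑' (_k : Fin p), ∑' (_l : Fin p), 4*ENNReal.ofReal (Real.exp (-u')) :=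
            ENNReal.tsum_le_tsum (fun k => ENNReal.tsum_le_tsum fun l => hBkl k l)
        _ = (p:ENNReal) * ((p:ENNReal) * (4*ENNReal.ofReal (Real.exp (-u')))) := by
            simp [tsum_fintype, Finset.sum_const, Finset.card_univ, nsmul_eq_mul]
        _ = ENNReal.ofReal ((p:ℝ)*((p:ℝ)*(4*Real.exp (-u')))) := by
            rw [ENNReal.ofReal_mul (by positivity), ENNReal.ofReal_mul (by positivity),
              ENNReal.ofReal_mul (by norm_num), ENNReal.ofReal_natCast]
            norm_num
    have hfinal : (p:ℝ)*((p:ℝ)*(4*Real.exp (-u'))) = 2*Real.exp (-χ) := by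
      have hexpu : Real.exp (-u') = Real.exp (-χ)/(2*(p:ℝ)^2) := by
        rw [hu'_def, hu_def]
        rw [show -(2*Real.log (p:ℝ) + χ + Real.log 2)
          = (-χ) + ((-Real.log (p:ℝ)) + (-Real.log (p:ℝ))) + (-Real.log 2) from by ring]
        rw [Real.exp_add, Real.exp_add, Real.exp_add, Real.exp_neg (Real.log (p:ℝ)),
          Real.exp_neg (Real.log 2), Real.exp_log hppos,
          Real.exp_log (by norm_num : (0:ℝ) < 2)]
        field_simp
      rw [hexpu]
      field_simp
      ring
    refine le_trans (ENNReal.toReal_le_of_le_ofReal (by positivity)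
      (le_trans (measure_mono ?_) hmain)) (le_of_eq hfinal)
    intro ω hω
    obtain ⟨k, l, hkl⟩ := hω
    exact ⟨k, l, le_trans (le_of_eq hδeq.symm) hkl⟩
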